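/- (ε-dependent weighted Poincaré inequality, first order) Let 0 < ε < L/2 and ρ_ε(x) = 1 - (x/L)(1 - ε/L). For every U ∈ H¹((0,L); ℝ) with U(0) = 0, one has ‖U‖_{L²(0,L)} ≤ 2L·‖ρ_ε U'‖_{L²(0,L)}. -/

import Mathlib

open Set MeasureTheory

theorem stmt8 (L ε : ℝ) (hL : 0 < L) (hε : 0 < ε) (hεL : ε < L / 2)
    (ρ : ℝ → ℝ) (hρ : ∀ x, ρ x = 1 - (x / L) * (1 - ε / L))
    (U U' : ℝ → ℝ)
    (hcont : ContinuousOn U (Icc 0 L))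
    (hderiv : ∀ x ∈ Ioo (0:ℝ) L, HasDerivAt U (U' x) x)
    (h0 : U 0 = 0)
    (hUL2 : IntegrableOn (fun x => (U x) ^ 2) (Ioo 0 L))
    (hdL2 : IntegrableOn (fun x => (U' x) ^ 2) (Ioo 0 L)) :
    Real.sqrt (∫ x in Ioo (0:ℝ) L, (U x) ^ 2) ≤
      2 * L * Real.sqrt (∫ x in Ioo (0:ℝ) L, (ρ x * U' x) ^ 2) := by
  have hL0 : (0:ℝ) ≤ L := hL.le
  -- basic facts about ρ on [0,L]
  have hρle : ∀ x ∈ Icc (0:ℝ) L, ρ x ≤ 1 := by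
    intro x hx
    rw [hρ]
    have h1 : 0 ≤ x / L := div_nonneg hx.1 hL0
    have h2 : 0 ≤ 1 - ε / L := by
      have : ε / L ≤ 1 := by
        rw [div_le_one hL]; linarith
      linarith
    nlinarith
  have hρge : ∀ x ∈ Icc (0:ℝ) L, L - x ≤ L * ρ x := by
    intro x hx
    rw [hρ]
    have h1 : x / L ≤ 1 := by rw [div_le_one hL]; exact hx.2
    have h2 : 0 ≤ x / L := div_nonneg hx.1 hL0
    have h3 : 0 < ε / L := div_pos hε hL
    have key : L * (1 - x / L * (1 - ε / L)) = L - x * (1 - ε / L) := by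
      field_simp
    rw [key]
    nlinarith [mul_nonneg hx.1 h3.le]
  have hρnonneg : ∀ x ∈ Icc (0:ℝ) L, 0 ≤ ρ x := by
    intro x hx
    have := hρge x hx
    have h1 : x ≤ L := hx.2
    nlinarith
  -- measurability
  have hUmeas : AEStronglyMeasurable U (volume.restrict (Ioo 0 L)) :=
    (hcont.mono Ioo_subset_Icc_self).aestronglyMeasurable measurableSet_Ioo
  have hU'meas : AEStronglyMeasurable U' (volume.restrict (Ioo 0 L)) := by
    have hm : AEStronglyMeasurable (deriv U) (volume.restrict (Ioo 0 L)) :=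
      (measurable_deriv U).aestronglyMeasurable
    refine hm.congr ?_
    filter_upwards [ae_restrict_mem measurableSet_Ioo] with x hx
    exact (hderiv x hx).deriv
  have hρcont : Continuous ρ := by
    have : ρ = fun x => 1 - (x / L) * (1 - ε / L) := funext hρ
    rw [this]; fun_prop
  have hρU'meas : AEStronglyMeasurable (fun x => ρ x * U' x) (volume.restrict (Ioo 0 L)) :=
    hρcont.aestronglyMeasurable.mul hU'meas
  -- integrability of (ρ U')²
  have hρU'L2 : IntegrableOn (fun x => (ρ x * U' x) ^ 2) (Ioo 0 L) := by
    refine Integrable.mono' hdL2 (hρU'meas.pow 2) ?_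
    filter_upwards [ae_restrict_mem measurableSet_Ioo] with x hx
    have h1 : 0 ≤ ρ x := hρnonneg x (Ioo_subset_Icc_self hx)
    have h2 : ρ x ≤ 1 := hρle x (Ioo_subset_Icc_self hx)
    rw [Real.norm_eq_abs, abs_of_nonneg (by positivity)]
    have hsq : ρ x ^ 2 ≤ 1 := by nlinarith
    calc (ρ x * U' x) ^ 2 = ρ x ^ 2 * U' x ^ 2 := by ring
      _ ≤ 1 * U' x ^ 2 := mul_le_mul_of_nonneg_right hsq (sq_nonneg _)
      _ = U' x ^ 2 := one_mul _
  -- integrability of x ↦ (x - L) * (2 * U x * U' x)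
  have hprodmeas : AEStronglyMeasurable (fun x => (x - L) * (2 * U x * U' x))
      (volume.restrict (Ioo 0 L)) := by
    exact ((continuous_id.sub continuous_const).aestronglyMeasurable).mul
      (((aestronglyMeasurable_const.mul hUmeas)).mul hU'meas)
  have hprodint : IntegrableOn (fun x => (x - L) * (2 * U x * U' x)) (Ioo 0 L) := by
    refine Integrable.mono' ((hUL2.add hdL2).const_mul L) hprodmeas ?_
    filter_upwards [ae_restrict_mem measurableSet_Ioo] with x hx
    simp only [Pi.add_apply]
    have hx1 : 0 < x := hx.1
    have hx2 : x < L := hx.2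
    rw [Real.norm_eq_abs, abs_mul, abs_mul, abs_mul]
    have h1 : |x - L| ≤ L := by rw [abs_sub_comm, abs_of_nonneg (by linarith)]; linarith
    have h2 : |(2:ℝ)| = 2 := by norm_num
    have h3 : 2 * |U x| * |U' x| ≤ U x ^ 2 + U' x ^ 2 := by
      nlinarith [sq_nonneg (|U x| - |U' x|), sq_abs (U x), sq_abs (U' x)]
    rw [h2]
    have hn : 0 ≤ 2 * |U x| * |U' x| := by positivity
    have step1 : |x - L| * (2 * |U x| * |U' x|) ≤ L * (2 * |U x| * |U' x|) :=
      mul_le_mul_of_nonneg_right h1 hn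
    have step2 : L * (2 * |U x| * |U' x|) ≤ L * (U x ^ 2 + U' x ^ 2) :=
      mul_le_mul_of_nonneg_left h3 hL0
    linarith
  -- interval integrability
  have hUI : IntervalIntegrable (fun x => (U x) ^ 2) volume 0 L :=
    (intervalIntegrable_iff_integrableOn_Ioo_of_le hL0).2 hUL2
  have hPI : IntervalIntegrable (fun x => (x - L) * (2 * U x * U' x)) volume 0 L :=
    (intervalIntegrable_iff_integrableOn_Ioo_of_le hL0).2 hprodint
  -- integration by parts: ∫ (U² + (x-L)·2UU') = 0
  have hG : ∀ x ∈ Ioo (0:ℝ) L,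
      HasDerivWithinAt (fun x => (x - L) * (U x) ^ 2)
        ((U x) ^ 2 + (x - L) * (2 * U x * U' x)) (Ioi x) x := by
    intro x hx
    have h1 : HasDerivAt (fun x : ℝ => x - L) 1 x := (hasDerivAt_id x).sub_const L
    have h2 : HasDerivAt (fun x => (U x) ^ 2) (2 * U x ^ 1 * U' x) x := (hderiv x hx).pow 2
    have := h1.mul h2
    simp only [one_mul, pow_one] at this
    exact this.hasDerivWithinAt.congr_deriv (by ring)
  have hGcont : ContinuousOn (fun x => (x - L) * (U x) ^ 2) (Icc 0 L) :=
    ((continuous_id.sub continuous_const).continuousOn).mul (hcont.pow 2)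
  have hFTC : ∫ x in (0:ℝ)..L, ((U x) ^ 2 + (x - L) * (2 * U x * U' x)) = 0 := by
    rw [intervalIntegral.integral_eq_sub_of_hasDeriv_right_of_le hL0 hGcont hG
      (hUI.add hPI)]
    simp [h0]
  have hsplit : ∫ x in (0:ℝ)..L, (U x) ^ 2
      = ∫ x in (0:ℝ)..L, (L - x) * (2 * U x * U' x) := by
    have := intervalIntegral.integral_add hUI hPI
    rw [this] at hFTC
    have h2 : ∫ x in (0:ℝ)..L, (L - x) * (2 * U x * U' x)
        = - ∫ x in (0:ℝ)..L, (x - L) * (2 * U x * U' x) := by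
      rw [← intervalIntegral.integral_neg]
      congr 1; funext x; ring
    rw [h2]; linarith
  -- convert to set integrals over Ioo
  have conv : ∀ f : ℝ → ℝ, ∫ x in (0:ℝ)..L, f x = ∫ x in Ioo (0:ℝ) L, f x := by
    intro f
    rw [intervalIntegral.integral_of_le hL0, ← integral_Ioc_eq_integral_Ioo]
  have hkey : ∫ x in Ioo (0:ℝ) L, (U x) ^ 2
      = ∫ x in Ioo (0:ℝ) L, (L - x) * (2 * U x * U' x) := by
    rw [← conv, ← conv]; exact hsplit
  -- pointwise bound and monotonicity
  have hmul : IntegrableOn (fun x => 2 * L * (‖U x‖ * ‖ρ x * U' x‖)) (Ioo 0 L) := by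
    refine Integrable.mono' ((hUL2.add hρU'L2).const_mul L) ?_ ?_
    · exact (aestronglyMeasurable_const.mul (hUmeas.norm.mul hρU'meas.norm))
    filter_upwards [ae_restrict_mem measurableSet_Ioo] with x hx
    simp only [Pi.add_apply]
    rw [Real.norm_eq_abs, abs_of_nonneg (by positivity)]
    have h3 : 2 * ‖U x‖ * ‖ρ x * U' x‖ ≤ U x ^ 2 + (ρ x * U' x) ^ 2 := by
      rw [Real.norm_eq_abs, Real.norm_eq_abs]
      nlinarith [sq_nonneg (|U x| - |ρ x * U' x|), sq_abs (U x), sq_abs (ρ x * U' x)]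
    have := mul_le_mul_of_nonneg_left h3 hL0
    linarith
  have hintneg : IntegrableOn (fun x => (L - x) * (2 * U x * U' x)) (Ioo 0 L) := by
    have : (fun x => (L - x) * (2 * U x * U' x))
        = fun x => -((x - L) * (2 * U x * U' x)) := by funext x; ring
    rw [this]; exact hprodint.neg
  have hmono : ∫ x in Ioo (0:ℝ) L, (L - x) * (2 * U x * U' x)
      ≤ ∫ x in Ioo (0:ℝ) L, 2 * L * (‖U x‖ * ‖ρ x * U' x‖) := by
    refine setIntegral_mono_on hintneg hmul measurableSet_Ioo ?_
    intro x hx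
    have hxI : x ∈ Icc (0:ℝ) L := Ioo_subset_Icc_self hx
    have h1 : L - x ≤ L * ρ x := hρge x hxI
    have h2 : 0 ≤ L - x := by linarith [hx.2]
    have h3 : 0 ≤ ρ x := hρnonneg x hxI
    have h4 : 2 * U x * U' x ≤ 2 * |U x| * |U' x| := by
      have := abs_mul (U x) (U' x)
      nlinarith [le_abs_self (U x * U' x), abs_nonneg (U x), abs_nonneg (U' x),
        abs_mul (U x) (U' x)]
    calc (L - x) * (2 * U x * U' x) ≤ (L - x) * (2 * |U x| * |U' x|) := by
          nlinarith [le_abs_self (2 * U x * U' x), abs_mul (U x) (U' x)]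
      _ ≤ (L * ρ x) * (2 * |U x| * |U' x|) := by
          have : 0 ≤ 2 * |U x| * |U' x| := by positivity
          nlinarith
      _ = 2 * L * (‖U x‖ * ‖ρ x * U' x‖) := by
          rw [Real.norm_eq_abs, Real.norm_eq_abs, abs_mul, abs_of_nonneg h3]; ring
  -- Cauchy–Schwarz
  have hU2 : MemLp U 2 (volume.restrict (Ioo 0 L)) :=
    (memLp_two_iff_integrable_sq hUmeas).2 hUL2
  have hρU'2 : MemLp (fun x => ρ x * U' x) 2 (volume.restrict (Ioo 0 L)) :=
    (memLp_two_iff_integrable_sq hρU'meas).2 hρU'L2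
  have hconj : (2:ℝ).HolderConjugate 2 := ⟨by norm_num, by norm_num, by norm_num⟩
  have hCS := MeasureTheory.integral_mul_norm_le_Lp_mul_Lq hconj
    (by rw [show ENNReal.ofReal (2:ℝ) = 2 by norm_num]; exact hU2)
    (by rw [show ENNReal.ofReal (2:ℝ) = 2 by norm_num]; exact hρU'2)
  -- rewrite the Lp norms with sqrt
  have hIU : (0:ℝ) ≤ ∫ x in Ioo (0:ℝ) L, (U x) ^ 2 :=
    setIntegral_nonneg measurableSet_Ioo fun x _ => sq_nonneg _
  have hIρ : (0:ℝ) ≤ ∫ x in Ioo (0:ℝ) L, (ρ x * U' x) ^ 2 :=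
    setIntegral_nonneg measurableSet_Ioo fun x _ => sq_nonneg _
  have hnorm1 : ∫ x in Ioo (0:ℝ) L, ‖U x‖ ^ (2:ℝ) = ∫ x in Ioo (0:ℝ) L, (U x) ^ 2 := by
    apply setIntegral_congr_fun measurableSet_Ioo
    intro x _
    have : ‖U x‖ ^ (2:ℝ) = (U x) ^ 2 := by
      rw [show ((2:ℝ) = ((2:ℕ):ℝ)) by norm_num, Real.rpow_natCast, Real.norm_eq_abs, sq_abs]
    exact this
  have hnorm2 : ∫ x in Ioo (0:ℝ) L, ‖ρ x * U' x‖ ^ (2:ℝ)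
      = ∫ x in Ioo (0:ℝ) L, (ρ x * U' x) ^ 2 := by
    apply setIntegral_congr_fun measurableSet_Ioo
    intro x _
    have : ‖ρ x * U' x‖ ^ (2:ℝ) = (ρ x * U' x) ^ 2 := by
      rw [show ((2:ℝ) = ((2:ℕ):ℝ)) by norm_num, Real.rpow_natCast, Real.norm_eq_abs, sq_abs]
    exact this
  rw [hnorm1, hnorm2] at hCS
  have hCS' : ∫ x in Ioo (0:ℝ) L, ‖U x‖ * ‖ρ x * U' x‖
      ≤ Real.sqrt (∫ x in Ioo (0:ℝ) L, (U x) ^ 2)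
        * Real.sqrt (∫ x in Ioo (0:ℝ) L, (ρ x * U' x) ^ 2) := by
    rw [Real.sqrt_eq_rpow, Real.sqrt_eq_rpow]
    convert hCS using 3 <;> norm_num
  -- put everything together
  set A := Real.sqrt (∫ x in Ioo (0:ℝ) L, (U x) ^ 2) with hA
  set B := Real.sqrt (∫ x in Ioo (0:ℝ) L, (ρ x * U' x) ^ 2) with hB
  have hA0 : 0 ≤ A := Real.sqrt_nonneg _
  have hB0 : 0 ≤ B := Real.sqrt_nonneg _
  have hAsq : A ^ 2 = ∫ x in Ioo (0:ℝ) L, (U x) ^ 2 := Real.sq_sqrt hIU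
  have hfinal : A ^ 2 ≤ 2 * L * (A * B) := by
    rw [hAsq, hkey]
    calc ∫ x in Ioo (0:ℝ) L, (L - x) * (2 * U x * U' x)
        ≤ ∫ x in Ioo (0:ℝ) L, 2 * L * (‖U x‖ * ‖ρ x * U' x‖) := hmono
      _ = 2 * L * ∫ x in Ioo (0:ℝ) L, ‖U x‖ * ‖ρ x * U' x‖ := by
          rw [integral_const_mul]
      _ ≤ 2 * L * (A * B) := by
          apply mul_le_mul_of_nonneg_left hCS' (by positivity)
  rcases eq_or_lt_of_le hA0 with h | h
  · rw [← h]; positivity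
  · nlinarith
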